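/- (Proposition 1.) Suppose 𝒳 is a finite alphabet, each p_{θ,k} has full support, the change occurs at ν = 1, and Ω = (σ_1, σ_2, …) is an arbitrary label sequence (so X^n[t] ∼ ℙ_{1,σ_t} for all t ≥ 1, independently across t). Let Π_{X^n[1,t]} denote the empirical distribution of all nt samples observed up to time t, and α_k = n_k/n. Then, ℙ^1_Ω-almost surely, n·[ f_{𝐏_0}(α, Π_{X^n[1,t]}) − f_{𝐏_1}(α, Π_{X^n[1,t]}) ] → n·f_{𝐏_0}(α, Σ_{k=1}^K α_k p_{1,k}) as t → ∞. -/

import Mathlib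

open MeasureTheory
open scoped ENNReal

/-- Kullback–Leibler divergence `D(U‖P)` between two probability vectors on a finite
alphabet, with value `∞` when `U` is not absolutely continuous with respect to `P`. -/
noncomputable def klD {𝒳 : Type*} [Fintype 𝒳] (U P : 𝒳 → ℝ) : ℝ≥0∞ := by
  classical
  exact if (∀ x, P x = 0 → U x = 0)
    then ENNReal.ofReal (∑ x, U x * Real.log (U x / P x)) else ⊤

/-- `f_P(α, Q) = inf { ∑_k α_k D(U_k‖P_k) : U_k probability vectors, ∑_k α_k U_k = Q }`. -/
noncomputable def fP {𝒳 : Type*} [Fintype 𝒳] {K : ℕ} (α : Fin K → ℝ)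
    (P : Fin K → 𝒳 → ℝ) (Q : 𝒳 → ℝ) : ℝ≥0∞ :=
  ⨅ (U : Fin K → 𝒳 → ℝ) (_ : (∀ k, (∀ x, 0 ≤ U k x) ∧ ∑ x, U k x = 1)
      ∧ ∀ x, ∑ k, α k * U k x = Q x),
    ∑ k, ENNReal.ofReal (α k) * klD (U k) (P k)

section Analysis
variable {𝒳 : Type*} [Fintype 𝒳] {K : ℕ}

/-- A probability vector. -/
def IsProb (Q : 𝒳 → ℝ) : Prop := (∀ x, 0 ≤ Q x) ∧ ∑ x, Q x = 1

noncomputable def sEnt (P U : 𝒳 → ℝ) : ℝ :=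
  ∑ x, (U x * Real.log (U x) - U x * Real.log (P x))

lemma sEnt_eq (P U : 𝒳 → ℝ) (hP : ∀ x, 0 < P x) :
    ∑ x, U x * Real.log (U x / P x) = sEnt P U := by
  unfold sEnt
  refine Finset.sum_congr rfl fun x _ => ?_
  rcases eq_or_ne (U x) 0 with h | h
  · simp [h]
  · rw [Real.log_div h (hP x).ne', mul_sub]

lemma sEnt_self (P : 𝒳 → ℝ) : sEnt P P = 0 := by
  unfold sEnt; simp

noncomputable def creal (α : Fin K → ℝ) (P : Fin K → 𝒳 → ℝ) (U : Fin K → 𝒳 → ℝ) : ℝ :=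
  ∑ k, α k * max (sEnt (P k) (U k)) 0

lemma creal_nonneg {α : Fin K → ℝ} (hα : ∀ k, 0 ≤ α k) (P U : Fin K → 𝒳 → ℝ) : 0 ≤ creal α P U :=
  Finset.sum_nonneg fun k _ => mul_nonneg (hα k) (le_max_right _ _)

lemma creal_continuous (α : Fin K → ℝ) (P : Fin K → 𝒳 → ℝ) : Continuous (creal α P) := by
  refine continuous_finset_sum _ fun k _ =>
    continuous_const.mul (Continuous.max ?_ continuous_const)
  unfold sEnt
  refine continuous_finset_sum _ fun x _ => ?_
  have h1 : Continuous fun U : Fin K → 𝒳 → ℝ => U k x :=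
    (continuous_apply x).comp (continuous_apply k)
  exact (Real.continuous_mul_log.comp h1).sub (h1.mul continuous_const)

def feas (α : Fin K → ℝ) (Q : 𝒳 → ℝ) : Set (Fin K → 𝒳 → ℝ) :=
  {U | (∀ k, (∀ x, 0 ≤ U k x) ∧ ∑ x, U k x = 1) ∧ ∀ x, ∑ k, α k * U k x = Q x}

noncomputable def Freal (α : Fin K → ℝ) (P : Fin K → 𝒳 → ℝ) (Q : 𝒳 → ℝ) : ℝ :=
  sInf (creal α P '' feas α Q)

lemma feas_nonempty {α : Fin K → ℝ} (hαs : ∑ k, α k = 1) {Q : 𝒳 → ℝ} (hQ : IsProb Q) :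
    (feas α Q).Nonempty := by
  refine ⟨fun _ => Q, ⟨fun k => hQ, fun x => ?_⟩⟩
  rw [← Finset.sum_mul, hαs, one_mul]

lemma Freal_nonneg (hα : ∀ k, 0 ≤ α k) (P : Fin K → 𝒳 → ℝ) (Q : 𝒳 → ℝ) :
    0 ≤ Freal α P Q :=
  Real.sInf_nonneg fun y ⟨U, _, hy⟩ => hy ▸ creal_nonneg hα P U

lemma bddBelow_creal (hα : ∀ k, 0 ≤ α k) (P : Fin K → 𝒳 → ℝ) (Q : 𝒳 → ℝ) :
    BddBelow (creal α P '' feas α Q) :=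
  ⟨0, fun y ⟨U, _, hy⟩ => hy ▸ creal_nonneg hα P U⟩

lemma klD_of_pos {U P : 𝒳 → ℝ} (hP : ∀ x, 0 < P x) :
    klD U P = ENNReal.ofReal (sEnt P U) := by
  rw [klD, if_pos fun x hx => absurd hx (hP x).ne', sEnt_eq P U hP]

lemma ofReal_max_zero (a : ℝ) : ENNReal.ofReal (max a 0) = ENNReal.ofReal a := by
  rcases le_total a 0 with h | h
  · rw [max_eq_right h, ENNReal.ofReal_of_nonpos h, ENNReal.ofReal_zero]
  · rw [max_eq_left h]

lemma fP_eq_iInf {α : Fin K → ℝ} (hα : ∀ k, 0 ≤ α k) {P : Fin K → 𝒳 → ℝ}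
    (hP : ∀ k x, 0 < P k x) (Q : 𝒳 → ℝ) :
    fP α P Q = ⨅ (U : Fin K → 𝒳 → ℝ) (_ : U ∈ feas α Q), ENNReal.ofReal (creal α P U) := by
  unfold fP
  refine iInf_congr fun U => iInf_congr fun hU => ?_
  rw [creal, ENNReal.ofReal_sum_of_nonneg (fun k _ => mul_nonneg (hα k) (le_max_right _ _))]
  refine Finset.sum_congr rfl fun k _ => ?_
  rw [klD_of_pos (hP k), ENNReal.ofReal_mul (hα k), ofReal_max_zero]

lemma fP_eq {α : Fin K → ℝ} (hα : ∀ k, 0 ≤ α k) (hαs : ∑ k, α k = 1)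
    {P : Fin K → 𝒳 → ℝ} (hP : ∀ k x, 0 < P k x) {Q : 𝒳 → ℝ} (hQ : IsProb Q) :
    fP α P Q = ENNReal.ofReal (Freal α P Q) := by
  rw [fP_eq_iInf hα hP]
  have hne : (feas α Q).Nonempty := feas_nonempty hαs hQ
  apply le_antisymm
  · refine ENNReal.le_of_forall_pos_le_add fun ε hε _ => ?_
    have h1 : Freal α P Q < Freal α P Q + ε := lt_add_of_pos_right _ (by exact_mod_cast hε)
    obtain ⟨y, ⟨U, hU, rfl⟩, hy⟩ := exists_lt_of_csInf_lt (hne.image _) h1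
    calc (⨅ (U : Fin K → 𝒳 → ℝ) (_ : U ∈ feas α Q), ENNReal.ofReal (creal α P U))
        ≤ ENNReal.ofReal (creal α P U) := iInf₂_le U hU
      _ ≤ ENNReal.ofReal (Freal α P Q + ε) := ENNReal.ofReal_le_ofReal hy.le
      _ ≤ ENNReal.ofReal (Freal α P Q) + ε := by
          rw [ENNReal.ofReal_add (Freal_nonneg hα P Q) (by positivity)]
          simp
  · exact le_iInf₂ fun U hU => ENNReal.ofReal_le_ofReal (csInf_le (bddBelow_creal hα P Q) ⟨U, hU, rfl⟩)

lemma fP_toReal {α : Fin K → ℝ} (hα : ∀ k, 0 ≤ α k) (hαs : ∑ k, α k = 1)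
    {P : Fin K → 𝒳 → ℝ} (hP : ∀ k x, 0 < P k x) {Q : 𝒳 → ℝ} (hQ : IsProb Q) :
    (fP α P Q).toReal = Freal α P Q := by
  rw [fP_eq hα hαs hP hQ, ENNReal.toReal_ofReal (Freal_nonneg hα P Q)]

lemma Freal_mix_zero {α : Fin K → ℝ} (hα : ∀ k, 0 ≤ α k) (hαs : ∑ k, α k = 1)
    {P : Fin K → 𝒳 → ℝ} (hPprob : ∀ k, IsProb (P k)) :
    Freal α P (fun x => ∑ k, α k * P k x) = 0 := by
  have hmem : P ∈ feas α (fun x => ∑ k, α k * P k x) := ⟨fun k => hPprob k, fun x => rfl⟩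
  have h0 : creal α P P = 0 := by
    unfold creal; simp [sEnt_self]
  refine le_antisymm ?_ (Freal_nonneg hα P _)
  have := csInf_le (bddBelow_creal hα P _) ⟨P, hmem, rfl⟩
  rwa [h0] at this


lemma coord_bounds {α : Fin K → ℝ} {Q : 𝒳 → ℝ} {U : Fin K → 𝒳 → ℝ}
    (hU : U ∈ feas α Q) (k : Fin K) (x : 𝒳) : 0 ≤ U k x ∧ U k x ≤ 1 := by
  refine ⟨(hU.1 k).1 x, ?_⟩
  have := Finset.single_le_sum (f := fun y => U k y) (fun y _ => (hU.1 k).1 y)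
    (Finset.mem_univ x)
  rw [(hU.1 k).2] at this
  exact this

lemma prob_bounds {Q : 𝒳 → ℝ} (hQ : IsProb Q) (x : 𝒳) : 0 ≤ Q x ∧ Q x ≤ 1 := by
  refine ⟨hQ.1 x, ?_⟩
  have := Finset.single_le_sum (f := fun y => Q y) (fun y _ => hQ.1 y) (Finset.mem_univ x)
  rw [hQ.2] at this
  exact this

lemma Freal_le_transport {α : Fin K → ℝ} (hα : ∀ k, 0 ≤ α k) (hαs : ∑ k, α k = 1)
    {P : Fin K → 𝒳 → ℝ}
    {Q Q' : 𝒳 → ℝ} (hQ : IsProb Q) (hQ' : IsProb Q') {η ε e : ℝ} (hη : 0 < η)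
    (hQ'η : ∀ x, η ≤ Q' x) (hε0 : 0 ≤ ε) (hεη : ε ≤ η) (hdist : ∀ x, |Q x - Q' x| ≤ ε)
    (he : ∀ U V : Fin K → 𝒳 → ℝ, (∀ k x, |U k x| ≤ 2) → (∀ k x, |V k x| ≤ 2) →
      (∀ k x, |V k x - U k x| ≤ ε * (1 + 1 / η)) → creal α P V ≤ creal α P U + e) :
    Freal α P Q' ≤ Freal α P Q + e := by
  set lam := ε / η with hlam
  have hlam0 : 0 ≤ lam := div_nonneg hε0 hη.le
  have hlam1 : lam ≤ 1 := (div_le_one hη).2 hεη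
  have hlamη : lam * η = ε := div_mul_cancel₀ ε hη.ne'
  have key : ∀ U ∈ feas α Q, Freal α P Q' ≤ creal α P U + e := by
    intro U hU
    set V : Fin K → 𝒳 → ℝ :=
      fun k x => (1 - lam) * (U k x + (Q' x - Q x)) + lam * Q' x with hV
    have hUb : ∀ k x, 0 ≤ U k x ∧ U k x ≤ 1 := fun k x => coord_bounds hU k x
    have hQb : ∀ x, 0 ≤ Q x ∧ Q x ≤ 1 := prob_bounds hQ
    have hQ'b : ∀ x, 0 ≤ Q' x ∧ Q' x ≤ 1 := prob_bounds hQ'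
    have hVnn : ∀ k x, 0 ≤ V k x := by
      intro k x
      have h1 := (hUb k x).1
      have h2 := abs_le.1 (hdist x)
      have h3 := hQ'η x
      have h4 : 0 ≤ lam * ε := mul_nonneg hlam0 hε0
      simp only [hV]
      nlinarith [mul_nonneg (sub_nonneg.2 hlam1)
          (by linarith : (0:ℝ) ≤ U k x + (Q' x - Q x) + ε),
        mul_nonneg hlam0 (by linarith : (0:ℝ) ≤ Q' x - η)]
    have hVsum : ∀ k, ∑ x, V k x = 1 := by
      intro k
      simp only [hV]
      rw [Finset.sum_add_distrib, ← Finset.mul_sum, ← Finset.mul_sum,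
        Finset.sum_add_distrib, Finset.sum_sub_distrib, (hU.1 k).2, hQ.2, hQ'.2]
      ring
    have hVcon : ∀ x, ∑ k, α k * V k x = Q' x := by
      intro x
      have : ∀ k, α k * V k x
          = (1 - lam) * (α k * U k x) + α k * ((1 - lam) * (Q' x - Q x) + lam * Q' x) := by
        intro k; simp only [hV]; ring
      rw [Finset.sum_congr rfl fun k _ => this k, Finset.sum_add_distrib,
        ← Finset.mul_sum, ← Finset.sum_mul, hU.2 x, hαs]
      ring
    have hVfeas : V ∈ feas α Q' := ⟨fun k => ⟨hVnn k, hVsum k⟩, hVcon⟩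
    have hclose : ∀ k x, |V k x - U k x| ≤ ε * (1 + 1 / η) := by
      intro k x
      have hid : V k x - U k x = (1 - lam) * (Q' x - Q x) + lam * (Q' x - U k x) := by
        simp only [hV]; ring
      rw [hid]
      have h2 := abs_le.1 (hdist x)
      calc |(1 - lam) * (Q' x - Q x) + lam * (Q' x - U k x)|
          ≤ |(1 - lam) * (Q' x - Q x)| + |lam * (Q' x - U k x)| := abs_add_le _ _
        _ = (1 - lam) * |Q' x - Q x| + lam * |Q' x - U k x| := by
            rw [abs_mul, abs_mul, abs_of_nonneg (by linarith : (0:ℝ) ≤ 1 - lam),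
              abs_of_nonneg hlam0]
        _ ≤ 1 * ε + lam * 1 := by
            have hb1 : |Q' x - Q x| ≤ ε := by rw [abs_sub_comm]; exact hdist x
            have hb2 : |Q' x - U k x| ≤ 1 := by
              rw [abs_le]
              constructor <;> nlinarith [(hQ'b x).1, (hQ'b x).2, (hUb k x).1, (hUb k x).2]
            have h1lam : (1:ℝ) - lam ≤ 1 := by linarith
            nlinarith [mul_nonneg (sub_nonneg.2 hlam1) (sub_nonneg.2 hb1),
              abs_nonneg (Q' x - Q x), abs_nonneg (Q' x - U k x)]
        _ ≤ ε * (1 + 1 / η) := by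
            rw [hlam]
            rw [div_eq_mul_inv, one_div]
            nlinarith [mul_pos hη (inv_pos.2 hη)]
    have hUbd : ∀ k x, |U k x| ≤ 2 := by
      intro k x
      rw [abs_le]; constructor <;> nlinarith [(hUb k x).1, (hUb k x).2]
    have hVbd : ∀ k x, |V k x| ≤ 2 := by
      intro k x
      have hεle1 : ε ≤ 1 := le_trans hεη (le_trans (hQ'η x) (hQ'b x).2)
      have hupper : V k x ≤ 2 := by
        simp only [hV]
        have h2 := abs_le.1 (hdist x)
        nlinarith [(hUb k x).1, (hUb k x).2, (hQ'b x).1, (hQ'b x).2,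
          mul_nonneg hlam0 hε0, mul_nonneg (sub_nonneg.2 hlam1) hε0,
          mul_le_one₀ hlam1 (hQ'b x).1 (hQ'b x).2]
      rw [abs_le]; exact ⟨by linarith [hVnn k x], hupper⟩
    calc Freal α P Q' ≤ creal α P V :=
          csInf_le (bddBelow_creal hα P Q') ⟨V, hVfeas, rfl⟩
      _ ≤ creal α P U + e := he U V hUbd hVbd hclose
  have hne : (feas α Q).Nonempty := feas_nonempty hαs hQ
  have : Freal α P Q' - e ≤ Freal α P Q := by
    refine le_csInf (hne.image _) ?_
    rintro y ⟨U, hU, rfl⟩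
    linarith [key U hU]
  linarith


lemma Freal_tendsto {α : Fin K → ℝ} (hα : ∀ k, 0 ≤ α k) (hαs : ∑ k, α k = 1)
    (P : Fin K → 𝒳 → ℝ) {Qs : 𝒳 → ℝ} (hQs : IsProb Qs) (hQspos : ∀ x, 0 < Qs x)
    {Qt : ℕ → 𝒳 → ℝ} (hprob : ∀ᶠ t in Filter.atTop, IsProb (Qt t))
    (hconv : ∀ x, Filter.Tendsto (fun t => Qt t x) Filter.atTop (nhds (Qs x))) :
    Filter.Tendsto (fun t => Freal α P (Qt t)) Filter.atTop (nhds (Freal α P Qs)) := by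
  rcases isEmpty_or_nonempty 𝒳 with hE | hNE
  · exfalso; have := hQs.2; simp [Finset.univ_eq_empty] at this
  -- minimum of Qs
  set η0 : ℝ := Finset.univ.inf' Finset.univ_nonempty Qs with hη0
  have hη0pos : 0 < η0 := by
    rw [hη0, Finset.lt_inf'_iff]
    exact fun x _ => hQspos x
  have hη0le : ∀ x, η0 ≤ Qs x := fun x => Finset.inf'_le _ (Finset.mem_univ x)
  set η : ℝ := η0 / 2 with hηdef
  have hηpos : 0 < η := by positivity
  -- uniform continuity on a compact ball
  have hKc : IsCompact (Metric.closedBall (0 : Fin K → 𝒳 → ℝ) 2) :=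
    isCompact_closedBall _ _
  have hu : UniformContinuousOn (creal α P) (Metric.closedBall (0 : Fin K → 𝒳 → ℝ) 2) :=
    hKc.uniformContinuousOn_of_continuous (creal_continuous α P).continuousOn
  rw [Metric.tendsto_atTop]
  intro e hepos
  obtain ⟨δ, hδpos, hδ⟩ := (Metric.uniformContinuousOn_iff).1 hu (e / 2) (by positivity)
  set c : ℝ := 1 + 1 / η with hcdef
  have hcpos : 0 < c := by positivity
  set ε : ℝ := min η (δ / 2 / c) with hεdef
  have hεpos : 0 < ε := lt_min hηpos (by positivity)
  have hεη : ε ≤ η := min_le_left _ _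
  have hεδ : ε * c ≤ δ / 2 := by
    calc ε * c ≤ δ / 2 / c * c := by
          exact mul_le_mul_of_nonneg_right (min_le_right _ _) hcpos.le
      _ = δ / 2 := div_mul_cancel₀ _ hcpos.ne'
  -- eventual closeness
  have h1 : ∀ᶠ t in Filter.atTop, ∀ x, |Qt t x - Qs x| ≤ ε := by
    rw [Filter.eventually_all]
    intro x
    obtain ⟨N, hN⟩ := Metric.tendsto_atTop.1 (hconv x) ε hεpos
    exact Filter.eventually_atTop.2 ⟨N, fun t ht => by
      have := (hN t ht).le; rwa [Real.dist_eq] at this⟩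
  have key : ∀ᶠ t in Filter.atTop, dist (Freal α P (Qt t)) (Freal α P Qs) < e := by
    filter_upwards [h1, hprob] with t hd hpt
    have hQtη : ∀ x, η ≤ Qt t x := by
      intro x
      have h2 := abs_le.1 (hd x)
      have := hη0le x
      simp only [hηdef] at *
      linarith
    have hQsη : ∀ x, η ≤ Qs x := fun x => by
      have := hη0le x; simp only [hηdef]; linarith
    -- the modulus hypothesis
    have he' : ∀ U V : Fin K → 𝒳 → ℝ, (∀ k x, |U k x| ≤ 2) → (∀ k x, |V k x| ≤ 2) →
        (∀ k x, |V k x - U k x| ≤ ε * c) → creal α P V ≤ creal α P U + e / 2 := by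
      intro U V hUb hVb hVU
      have hUmem : U ∈ Metric.closedBall (0 : Fin K → 𝒳 → ℝ) 2 := by
        rw [Metric.mem_closedBall, dist_pi_le_iff (by norm_num : (0:ℝ) ≤ 2)]
        intro k
        rw [dist_pi_le_iff (by norm_num : (0:ℝ) ≤ 2)]
        intro x
        simpa [Real.dist_eq] using hUb k x
      have hVmem : V ∈ Metric.closedBall (0 : Fin K → 𝒳 → ℝ) 2 := by
        rw [Metric.mem_closedBall, dist_pi_le_iff (by norm_num : (0:ℝ) ≤ 2)]
        intro k
        rw [dist_pi_le_iff (by norm_num : (0:ℝ) ≤ 2)]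
        intro x
        simpa [Real.dist_eq] using hVb k x
      have hdistVU : dist V U < δ := by
        have h0 : (0:ℝ) ≤ ε * c := by positivity
        have : dist V U ≤ ε * c := by
          rw [dist_pi_le_iff h0]
          intro k
          rw [dist_pi_le_iff h0]
          intro x
          simpa [Real.dist_eq] using hVU k x
        exact lt_of_le_of_lt this (lt_of_le_of_lt hεδ (by linarith))
      have := hδ V hVmem U hUmem hdistVU
      rw [Real.dist_eq, abs_lt] at this
      linarith [this.1, this.2]
    have hA : Freal α P (Qt t) ≤ Freal α P Qs + e / 2 :=
      Freal_le_transport hα hαs hQs hpt hηpos hQtη hεpos.le hεη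
        (fun x => by rw [abs_sub_comm]; exact hd x) he'
    have hB : Freal α P Qs ≤ Freal α P (Qt t) + e / 2 :=
      Freal_le_transport hα hαs hpt hQs hηpos hQsη hεpos.le hεη hd he'
    rw [Real.dist_eq, abs_lt]
    constructor <;> linarith
  obtain ⟨N, hN⟩ := Filter.eventually_atTop.1 key
  exact ⟨N, hN⟩

end Analysis

section Prob
open ProbabilityTheory
variable {𝒳 Ω' ι : Type*} [Fintype 𝒳] [MeasurableSpace 𝒳] [MeasurableSingletonClass 𝒳]
  [MeasurableSpace Ω'] {Pr : Measure Ω'}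

lemma map_tuple_eq_pi [DecidableEq ι] {m : ℕ} {f : ι → Ω' → 𝒳}
    (hindep : iIndepFun (m := fun _ : ι => (inferInstance : MeasurableSpace 𝒳)) f Pr)
    (hf : ∀ q, Measurable (f q)) (φ : Fin m → ι) (hφ : Function.Injective φ) :
    Measure.map (fun ω i => f (φ i) ω) Pr
      = Measure.pi (fun i => Measure.map (f (φ i)) Pr) := by
  haveI := hindep.isProbabilityMeasure
  apply Measure.ext_of_singleton
  intro v
  have hmt : Measurable (fun ω i => f (φ i) ω) := measurable_pi_lambda _ fun i => hf (φ i)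
  classical
  set sets : ι → Set 𝒳 := fun q => ⋂ i ∈ Finset.univ.filter (fun i => φ i = q), ({v i} : Set 𝒳)
    with hsetsdef
  have hsets_meas : ∀ q, MeasurableSet (sets q) := fun q =>
    Finset.measurableSet_biInter _ fun i _ => measurableSet_singleton (v i)
  have hkey : ∀ i : Fin m, sets (φ i) = {v i} := by
    intro i
    have hfil : Finset.univ.filter (fun j => φ j = φ i) = {i} := by
      ext j
      simp only [Finset.mem_filter, Finset.mem_univ, true_and, Finset.mem_singleton]
      exact ⟨fun h => hφ h, fun h => h ▸ rfl⟩
    rw [hsetsdef]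
    simp only [hfil, Finset.mem_singleton, Set.iInter_iInter_eq_left]
  have hpre : (fun ω i => f (φ i) ω) ⁻¹' {v} = ⋂ q ∈ Finset.univ.image φ, f q ⁻¹' sets q := by
    rw [Finset.set_biInter_finset_image]
    have hcong : ⋂ i ∈ Finset.univ, f (φ i) ⁻¹' sets (φ i)
        = ⋂ i ∈ (Finset.univ : Finset (Fin m)), f (φ i) ⁻¹' ({v i} : Set 𝒳) := by
      refine Set.iInter₂_congr fun i _ => ?_
      rw [hkey i]
    rw [hcong]
    ext ω
    simp [funext_iff]
  have hRHS : Measure.pi (fun i => Measure.map (f (φ i)) Pr) {v}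
      = ∏ i, Measure.map (f (φ i)) Pr {v i} := by
    rw [← Set.univ_pi_singleton v, Measure.pi_pi]
  rw [hRHS, Measure.map_apply hmt (measurableSet_singleton v), hpre,
    hindep.measure_inter_preimage_eq_mul _ (fun q _ => hsets_meas q),
    Finset.prod_image (fun i _ j _ h => hφ h)]
  refine Finset.prod_congr rfl fun i _ => ?_
  rw [hkey i, Measure.map_apply (hf (φ i)) (measurableSet_singleton (v i))]

end Prob

lemma exists_perm_of_card_eq {n K : ℕ} {g h : Fin n → Fin K}
    (hc : ∀ k, (Finset.univ.filter (fun i => g i = k)).card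
      = (Finset.univ.filter (fun i => h i = k)).card) :
    ∃ π : Equiv.Perm (Fin n), ∀ i, g (π i) = h i := by
  classical
  have e : ∀ k : Fin K, {i // i ∈ Finset.univ.filter (fun i => h i = k)}
      ≃ {i // i ∈ Finset.univ.filter (fun i => g i = k)} := fun k =>
    Fintype.equivOfCardEq (by rw [Fintype.card_coe, Fintype.card_coe, hc])
  have hmem : ∀ i : Fin n, i ∈ Finset.univ.filter (fun j => h j = h i) := by
    intro i; simp
  set f : Fin n → Fin n := fun i => ((e (h i)) ⟨i, hmem i⟩ : Fin n) with hfdef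
  have hgf : ∀ i, g (f i) = h i := by
    intro i
    have := ((e (h i)) ⟨i, hmem i⟩).2
    rw [Finset.mem_filter] at this
    exact this.2
  have key : ∀ (k : Fin K) (j : Fin n) (hj : h j = k),
      f j = ((e k) ⟨j, by simp [hj]⟩ : Fin n) := by
    intro k j hj
    subst hj
    rfl
  have hinj : Function.Injective f := by
    intro i j hij
    have hk : h j = h i := by rw [← hgf i, ← hgf j, hij]
    have h1 : f i = ((e (h i)) ⟨i, hmem i⟩ : Fin n) := rfl
    have h2 : f j = ((e (h i)) ⟨j, by simp [hk]⟩ : Fin n) := key (h i) j hk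
    have h3 : (e (h i)) ⟨i, hmem i⟩ = (e (h i)) ⟨j, by simp [hk]⟩ :=
      Subtype.ext (by rw [← h1, ← h2, hij])
    have := (e (h i)).injective h3
    exact congrArg Subtype.val this
  refine ⟨Equiv.ofBijective f ((Finite.injective_iff_bijective).1 hinj), fun i => hgf i⟩


open ProbabilityTheory

open Classical in
/-- Proposition 1: the change occurs at `ν = 1`, i.e. all samples are
post-change: `X t i` (sample of sensor `i` at time `t`, time indexed from `0`) are mutually
independent with `X t i ∼ p_{1, lab t i}`, where each labeling `lab t` has exactly `n_k`
sensors in group `k`.  Let `Π_t` be the empirical distribution of the first `n·t` samples.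
Then almost surely
`n [f_{P0}(α, Π_t) − f_{P1}(α, Π_t)] → n f_{P0}(α, ∑_k α_k p_{1,k})` as `t → ∞`. -/
theorem stmt_17 {𝒳 Ω' : Type*} [Fintype 𝒳] [DecidableEq 𝒳]
    [MeasurableSpace 𝒳] [MeasurableSingletonClass 𝒳]
    [MeasurableSpace Ω'] (Pr : Measure Ω') [IsProbabilityMeasure Pr]
    (n K : ℕ) (hnpos : 0 < n) (nk : Fin K → ℕ) (hn : ∑ k, nk k = n)
    (p : Bool → Fin K → 𝒳 → ℝ)
    (hp : ∀ θ k, (∀ x, 0 < p θ k x) ∧ ∑ x, p θ k x = 1)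
    (α : Fin K → ℝ) (hα : ∀ k, α k = (nk k : ℝ) / n)
    (lab : ℕ → Fin n → Fin K)
    (hlab : ∀ t k, (Finset.univ.filter (fun i => lab t i = k)).card = nk k)
    (X : ℕ → Fin n → Ω' → 𝒳)
    (hXmeas : ∀ t i, Measurable (X t i))
    (hXdist : ∀ t i x, Pr {ω' | X t i ω' = x} = ENNReal.ofReal (p true (lab t i) x))
    (hXindep : ProbabilityTheory.iIndepFun
      (m := fun _ : ℕ × Fin n => (inferInstance : MeasurableSpace 𝒳))
      (fun q ω' => X q.1 q.2 ω') Pr) :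
    ∀ᵐ ω' ∂Pr, Filter.Tendsto
      (fun t : ℕ => (n : ℝ) *
        ((fP α (p false) (fun x => (((Finset.range t ×ˢ (Finset.univ : Finset (Fin n))).filter
            (fun q => X q.1 q.2 ω' = x)).card : ℝ) / ((t * n : ℕ) : ℝ))).toReal
         - (fP α (p true) (fun x => (((Finset.range t ×ˢ (Finset.univ : Finset (Fin n))).filter
            (fun q => X q.1 q.2 ω' = x)).card : ℝ) / ((t * n : ℕ) : ℝ))).toReal))
      Filter.atTop
      (nhds ((n : ℝ) * (fP α (p false) (fun x => ∑ k, α k * p true k x)).toReal)) := by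
  classical
  have hnne : (n:ℝ) ≠ 0 := Nat.cast_ne_zero.2 hnpos.ne'
  have hαnn : ∀ k, 0 ≤ α k := fun k => by rw [hα k]; positivity
  have hαs : ∑ k, α k = 1 := by
    have h1 : ∑ k, α k = (∑ k, (nk k : ℝ)) / n := by
      rw [Finset.sum_div]; exact Finset.sum_congr rfl fun k _ => hα k
    rw [h1, ← Nat.cast_sum, hn, div_self hnne]
  set Qs : 𝒳 → ℝ := fun x => ∑ k, α k * p true k x with hQsdef
  have hQsnn : ∀ x, 0 ≤ Qs x := fun x =>
    Finset.sum_nonneg fun k _ => mul_nonneg (hαnn k) ((hp true k).1 x).le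
  have hQssum : ∑ x, Qs x = 1 := by
    simp only [hQsdef]
    rw [Finset.sum_comm]
    calc ∑ k, ∑ x, α k * p true k x = ∑ k, α k := by
          refine Finset.sum_congr rfl fun k _ => ?_
          rw [← Finset.mul_sum, (hp true k).2, mul_one]
      _ = 1 := hαs
  have hQsprob : IsProb Qs := ⟨hQsnn, hQssum⟩
  have hQspos : ∀ x, 0 < Qs x := by
    obtain ⟨k0, hk0⟩ : ∃ k, 0 < α k := by
      by_contra hcon
      push_neg at hcon
      have h1 : ∑ k, α k ≤ 0 := Finset.sum_nonpos fun k _ => hcon k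
      rw [hαs] at h1; linarith
    intro x
    have h1 : α k0 * p true k0 x ≤ Qs x :=
      Finset.single_le_sum (fun k _ => mul_nonneg (hαnn k) ((hp true k).1 x).le)
        (Finset.mem_univ k0)
    have h2 : 0 < α k0 * p true k0 x := mul_pos hk0 ((hp true k0).1 x)
    linarith
  have hpprob : ∀ θ k, IsProb (p θ k) := fun θ k => ⟨fun x => ((hp θ k).1 x).le, (hp θ k).2⟩
  have hppos : ∀ θ k x, 0 < p θ k x := fun θ k x => (hp θ k).1 x
  -- Strong law of large numbers for each letter x
  have hSLLN : ∀ x : 𝒳, ∀ᵐ ω' ∂Pr, Filter.Tendsto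
      (fun t : ℕ => (((Finset.range t ×ˢ (Finset.univ : Finset (Fin n))).filter
          (fun q => X q.1 q.2 ω' = x)).card : ℝ) / ((t * n : ℕ) : ℝ))
      Filter.atTop (nhds (Qs x)) := by
    intro x
    set Y : ℕ → Ω' → ℝ := fun s ω => ∑ i, if X s i ω = x then (1:ℝ) else 0 with hYdef
    have hind : ∀ s (i : Fin n), (fun ω => if X s i ω = x then (1:ℝ) else 0)
        = (X s i ⁻¹' {x}).indicator (fun _ => (1:ℝ)) := by
      intro s i; funext ω; simp [Set.indicator_apply, Set.mem_preimage]
    have hmeas_set : ∀ s (i : Fin n), MeasurableSet (X s i ⁻¹' {x}) :=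
      fun s i => hXmeas s i (measurableSet_singleton x)
    have hterm_int : ∀ s (i : Fin n),
        Integrable (fun ω => if X s i ω = x then (1:ℝ) else 0) Pr := by
      intro s i
      rw [hind s i]
      exact (integrable_const 1).indicator (hmeas_set s i)
    have hYint : ∀ s, Integrable (Y s) Pr := by
      intro s
      exact integrable_finset_sum _ fun i _ => hterm_int s i
    -- the mean
    have hmean : ∫ ω, Y 0 ω ∂Pr = (n : ℝ) * Qs x := by
      simp only [hYdef]
      rw [integral_finset_sum _ fun i _ => hterm_int 0 i]
      have hone : ∀ i : Fin n, ∫ ω, (if X 0 i ω = x then (1:ℝ) else 0) ∂Pr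
          = p true (lab 0 i) x := by
        intro i
        rw [hind 0 i, integral_indicator_const _ (hmeas_set 0 i)]
        have hpr : Pr (X 0 i ⁻¹' {x}) = ENNReal.ofReal (p true (lab 0 i) x) := hXdist 0 i x
        rw [measureReal_def, hpr, smul_eq_mul, ENNReal.toReal_ofReal ((hp true (lab 0 i)).1 x).le, mul_one]
      rw [Finset.sum_congr rfl fun i _ => hone i]
      have hgroup : ∑ i : Fin n, p true (lab 0 i) x = ∑ k, (nk k : ℝ) * p true k x := by
        rw [← Finset.sum_fiberwise_of_maps_to (fun i _ => Finset.mem_univ (lab 0 i))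
          (fun i => p true (lab 0 i) x)]
        refine Finset.sum_congr rfl fun k _ => ?_
        rw [Finset.sum_congr rfl (fun i hi => by rw [(Finset.mem_filter.1 hi).2]),
          Finset.sum_const, hlab 0 k, nsmul_eq_mul]
      rw [hgroup]
      simp only [hQsdef]
      rw [Finset.mul_sum]
      refine Finset.sum_congr rfl fun k _ => ?_
      rw [hα k]
      field_simp
    -- pairwise independence
    have hYindep : Pairwise (Function.onFun (IndepFun · · Pr) Y) := by
      intro s r hsr
      have hdisj : Disjoint (({s} : Finset ℕ) ×ˢ (Finset.univ : Finset (Fin n)))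
          (({r} : Finset ℕ) ×ˢ (Finset.univ : Finset (Fin n))) := by
        rw [Finset.disjoint_left]
        intro q hq hq'
        simp only [Finset.mem_product, Finset.mem_singleton] at hq hq'
        exact hsr (hq.1 ▸ hq'.1 ▸ rfl)
      have hbase := hXindep.indepFun_finset _ _ hdisj (fun q => hXmeas q.1 q.2)
      have hgmeas : ∀ S : Finset (ℕ × Fin n),
          Measurable (fun v : (q : S) → 𝒳 => ∑ q, if v q = x then (1:ℝ) else 0) :=
        fun S => measurable_of_finite _
      have hcomp := hbase.comp (hgmeas _) (hgmeas _)
      have hYeq : ∀ s : ℕ,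
          ((fun v : (q : (({s} : Finset ℕ) ×ˢ (Finset.univ : Finset (Fin n)))) → 𝒳 =>
            ∑ q, if v q = x then (1:ℝ) else 0)
          ∘ (fun ω (q : (({s} : Finset ℕ) ×ˢ (Finset.univ : Finset (Fin n)))) =>
            X (q : ℕ × Fin n).1 (q : ℕ × Fin n).2 ω)) = Y s := by
        intro s
        funext ω
        simp only [Function.comp_apply, hYdef]
        rw [Finset.sum_coe_sort _ (fun q : ℕ × Fin n => if X q.1 q.2 ω = x then (1:ℝ) else 0)]
        rw [Finset.sum_product, Finset.sum_singleton]
      rw [hYeq s, hYeq r] at hcomp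
      exact hcomp
    -- identical distribution
    have hYident : ∀ s, IdentDistrib (Y s) (Y 0) Pr Pr := by
      intro s
      obtain ⟨π, hπ⟩ := exists_perm_of_card_eq (g := lab s) (h := lab 0)
        (fun k => by rw [hlab s k, hlab 0 k])
      have hφs : Function.Injective (fun i : Fin n => ((s, π i) : ℕ × Fin n)) := by
        intro i j hij
        exact π.injective (congrArg Prod.snd hij)
      have hφ0 : Function.Injective (fun i : Fin n => ((0, i) : ℕ × Fin n)) := by
        intro i j hij; exact congrArg Prod.snd hij
      have h1 := map_tuple_eq_pi hXindep (fun q => hXmeas q.1 q.2)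
        (fun i : Fin n => ((s, π i) : ℕ × Fin n)) hφs
      have h0 := map_tuple_eq_pi hXindep (fun q => hXmeas q.1 q.2)
        (fun i : Fin n => ((0, i) : ℕ × Fin n)) hφ0
      have hfac : ∀ i : Fin n, Measure.map (fun ω => X s (π i) ω) Pr
          = Measure.map (fun ω => X 0 i ω) Pr := by
        intro i
        apply Measure.ext_of_singleton
        intro y
        rw [Measure.map_apply (hXmeas s (π i)) (measurableSet_singleton y),
          Measure.map_apply (hXmeas 0 i) (measurableSet_singleton y)]
        have e1 : X s (π i) ⁻¹' {y} = {ω' | X s (π i) ω' = y} := rfl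
        have e2 : X 0 i ⁻¹' {y} = {ω' | X 0 i ω' = y} := rfl
        rw [e1, e2, hXdist, hXdist, hπ i]
      have hrow : IdentDistrib (fun ω (i : Fin n) => X s (π i) ω)
          (fun ω (i : Fin n) => X 0 i ω) Pr Pr := by
        refine ⟨(measurable_pi_lambda _ fun i => hXmeas s (π i)).aemeasurable,
          (measurable_pi_lambda _ fun i => hXmeas 0 i).aemeasurable, ?_⟩
        refine Eq.trans h1 (Eq.trans ?_ h0.symm)
        exact congrArg Measure.pi (funext fun i => hfac i)
      have hg : Measurable (fun v : Fin n → 𝒳 => ∑ i, if v i = x then (1:ℝ) else 0) :=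
        measurable_of_finite _
      have hcomp := hrow.comp hg
      have hys : ((fun v : Fin n → 𝒳 => ∑ i, if v i = x then (1:ℝ) else 0)
          ∘ (fun ω (i : Fin n) => X s (π i) ω)) = Y s := by
        funext ω
        simp only [Function.comp_apply, hYdef]
        exact Equiv.sum_comp π (fun i => if X s i ω = x then (1:ℝ) else 0)
      have hy0 : ((fun v : Fin n → 𝒳 => ∑ i, if v i = x then (1:ℝ) else 0)
          ∘ (fun ω (i : Fin n) => X 0 i ω)) = Y 0 := rfl
      rw [hys, hy0] at hcomp
      exact hcomp
    have hlaw := ProbabilityTheory.strong_law_ae_real Y (hYint 0) hYindep hYident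
    rw [hmean] at hlaw
    filter_upwards [hlaw] with ω hω
    have hconv' := hω.div_const (n:ℝ)
    have hlim : (n:ℝ) * Qs x / n = Qs x := by field_simp
    rw [hlim] at hconv'
    refine hconv'.congr fun t => ?_
    have hcard : (((Finset.range t ×ˢ (Finset.univ : Finset (Fin n))).filter
        (fun q => X q.1 q.2 ω = x)).card : ℝ) = ∑ s ∈ Finset.range t, Y s ω := by
      rw [Finset.card_filter]
      push_cast
      rw [Finset.sum_product]
    rw [hcard, Nat.cast_mul, ← div_div]
  -- combine over x and conclude
  have hae : ∀ᵐ ω' ∂Pr, ∀ x : 𝒳, Filter.Tendsto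
      (fun t : ℕ => (((Finset.range t ×ˢ (Finset.univ : Finset (Fin n))).filter
          (fun q => X q.1 q.2 ω' = x)).card : ℝ) / ((t * n : ℕ) : ℝ))
      Filter.atTop (nhds (Qs x)) := (MeasureTheory.ae_all_iff).2 hSLLN
  filter_upwards [hae] with ω' hω'
  set Emp : ℕ → 𝒳 → ℝ := fun t x =>
    (((Finset.range t ×ˢ (Finset.univ : Finset (Fin n))).filter
      (fun q => X q.1 q.2 ω' = x)).card : ℝ) / ((t * n : ℕ) : ℝ) with hEmpdef
  have hprob : ∀ᶠ t in Filter.atTop, IsProb (Emp t) := by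
    rw [Filter.eventually_atTop]
    refine ⟨1, fun t ht => ?_⟩
    have htn0 : (t * n : ℕ) ≠ 0 := Nat.mul_ne_zero (by omega) hnpos.ne'
    have htn : ((t * n : ℕ) : ℝ) ≠ 0 := Nat.cast_ne_zero.2 htn0
    constructor
    · intro x
      simp only [hEmpdef]
      positivity
    · have hsum : ∑ x : 𝒳, (((Finset.range t ×ˢ (Finset.univ : Finset (Fin n))).filter
          (fun q => X q.1 q.2 ω' = x)).card : ℝ) = ((t * n : ℕ) : ℝ) := by
        rw [← Nat.cast_sum]
        congr 1
        rw [← Finset.card_eq_sum_card_fiberwise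
          (fun q _ => Finset.mem_univ (X q.1 q.2 ω'))]
        rw [Finset.card_product, Finset.card_range, Finset.card_univ, Fintype.card_fin]
      simp only [hEmpdef]
      rw [← Finset.sum_div, hsum, div_self htn]
  have hF0 := Freal_tendsto hαnn hαs (p false) hQsprob hQspos hprob (fun x => hω' x)
  have hF1 := Freal_tendsto hαnn hαs (p true) hQsprob hQspos hprob (fun x => hω' x)
  have hzero : Freal α (p true) Qs = 0 := by
    rw [hQsdef]
    exact Freal_mix_zero hαnn hαs (hpprob true)
  rw [hzero] at hF1
  have hmain : Filter.Tendsto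
      (fun t => (n:ℝ) * (Freal α (p false) (Emp t) - Freal α (p true) (Emp t)))
      Filter.atTop (nhds ((n:ℝ) * Freal α (p false) Qs)) := by
    have h2 := (hF0.sub hF1).const_mul (n:ℝ)
    simpa using h2
  have htarget : (fP α (p false) Qs).toReal = Freal α (p false) Qs :=
    fP_toReal hαnn hαs (hppos false) hQsprob
  rw [htarget]
  refine Filter.Tendsto.congr' ?_ hmain
  filter_upwards [hprob] with t hpt
  rw [← fP_toReal hαnn hαs (hppos false) hpt, ← fP_toReal hαnn hαs (hppos true) hpt]
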